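/- arXiv:1606.03325 — 3 statements merged into one kernel-verified Lean document; each statement's English description precedes it below -/
import Mathlib

section
/- Let a be a symmetric d×d real matrix and let π, ρ ∈ Δ^d be two points of the standard simplex. Define τ^ρ_{ij} = (ρ − e_i)ᵀ a (ρ − e_j) and the excess growth γ*_π = (1/2)(Σ_i π_i a_{ii} − Σ_{i,j} π_i π_j a_{ij}). Then γ*_π = (1/2)(Σ_i π_i τ^ρ_{ii} − Σ_{i,j} π_i π_j τ^ρ_{ij}) (numéraire invariance of the excess growth rate). -/
theorem stmt7 (d : ℕ) (a : Matrix (Fin d) (Fin d) ℝ) (ha : a.IsSymm)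
    (π ρ : Fin d → ℝ)
    (hπ : (∀ i, 0 ≤ π i) ∧ ∑ i, π i = 1) (hρ : (∀ i, 0 ≤ ρ i) ∧ ∑ i, ρ i = 1)
    (τ : Fin d → Fin d → ℝ)
    (hτ : ∀ i j, τ i j = ∑ k, ∑ l,
      (ρ k - if i = k then 1 else 0) * a k l * (ρ l - if j = l then 1 else 0)) :
    (1 / 2) * (∑ i, π i * a i i - ∑ i, ∑ j, π i * π j * a i j)
      = (1 / 2) * (∑ i, π i * τ i i - ∑ i, ∑ j, π i * π j * τ i j) := by
  set S := ∑ k, ∑ l, ρ k * a k l * ρ l with hS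
  set C : Fin d → ℝ := fun j => ∑ k, ρ k * a k j with hC
  set B : Fin d → ℝ := fun i => ∑ l, a i l * ρ l with hB
  have key : ∀ i j, τ i j = S - C j - B i + a i j := by
    intro i j
    rw [hτ]
    have : ∀ k l, (ρ k - if i = k then 1 else 0) * a k l * (ρ l - if j = l then 1 else 0)
        = ρ k * a k l * ρ l - (if i = k then 1 else 0) * (a k l * ρ l)
          - (if j = l then 1 else 0) * (ρ k * a k l)
          + (if i = k then 1 else 0) * ((if j = l then 1 else 0) * a k l) := by
      intro k l; ring
    simp only [this, Finset.sum_add_distrib, Finset.sum_sub_distrib,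
      ← Finset.mul_sum, Finset.sum_ite_eq, Finset.mem_univ, if_true, ite_mul, one_mul,
      zero_mul, Finset.sum_ite_eq']
    ring_nf
    simp [Finset.sum_ite_eq, hC, hB]
    ring
  simp only [key]
  have h1 : ∑ i, π i * (S - C i - B i + a i i)
      = S - (∑ i, π i * C i) - (∑ i, π i * B i) + ∑ i, π i * a i i := by
    simp only [mul_sub, mul_add, Finset.sum_add_distrib, Finset.sum_sub_distrib,
      ← Finset.sum_mul, hπ.2, one_mul]
  have hin : ∀ i, ∑ j, π i * π j * (S - C j - B i + a i j)
      = π i * (S - (∑ j, π j * C j) - B i + ∑ j, π j * a i j) := by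
    intro i
    have : ∀ j, π i * π j * (S - C j - B i + a i j)
        = π i * (π j * S - π j * C j - π j * B i + π j * a i j) := by intro j; ring
    simp only [this, ← Finset.mul_sum, Finset.sum_add_distrib, Finset.sum_sub_distrib,
      ← Finset.sum_mul, hπ.2, one_mul]
  have hfac : ∀ i, π i * ∑ j, π j * a i j = ∑ j, π i * π j * a i j := fun i => by
    rw [Finset.mul_sum]; exact Finset.sum_congr rfl fun j _ => by ring
  have h2 : ∑ i, ∑ j, π i * π j * (S - C j - B i + a i j)
      = S - (∑ j, π j * C j) - (∑ i, π i * B i) + ∑ i, ∑ j, π i * π j * a i j := by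
    rw [Finset.sum_congr rfl fun i _ => hin i]
    simp only [mul_sub, mul_add, Finset.sum_add_distrib, Finset.sum_sub_distrib,
      ← Finset.sum_mul, hπ.2, one_mul, hfac]
  rw [h1, h2]
  have hCB : ∀ i, C i = B i := by
    intro i
    simp only [hC, hB]
    exact Finset.sum_congr rfl fun k _ => by
      rw [show a k i = a i k from by rw [← ha.apply]]; ring
  simp only [hCB]
  ring
end

section
/- Let G be C² and strictly positive on an open neighborhood U of Δ^d_+ in ℝ^d, let h be the log-sum-exp function, μ = ∇h(x), g_k = ∂_k log G(μ), π_i = μ_i(1+g_i−Σ_k μ_k g_k), and Γ(x) = log G(∇h(x)). Then the second partial derivatives of Γ are given by ∂_{ij}Γ = Σ_{k,ℓ} (G_{x_ℓ x_k}(μ)/G(μ)) μ_ℓ μ_k (μ_j − δ_{jℓ})(μ_i − δ_{ik}) − π_i π_j + μ_i μ_j + δ_{ij}(π_i − μ_i). -/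
open Finset

variable {d : ℕ}

noncomputable def pr (k : Fin d) : (Fin d → ℝ) →L[ℝ] ℝ := ContinuousLinearMap.proj k

@[simp] lemma pr_apply (k : Fin d) (v : Fin d → ℝ) : pr k v = v k := rfl

noncomputable def smx (y : Fin d → ℝ) : Fin d → ℝ := fun m => Real.exp (y m) / ∑ l, Real.exp (y l)

lemma sum_exp_pos [NeZero d] (y : Fin d → ℝ) : 0 < ∑ l, Real.exp (y l) :=
  Finset.sum_pos (fun _ _ => Real.exp_pos _) Finset.univ_nonempty

lemma smx_pos [NeZero d] (y : Fin d → ℝ) (m : Fin d) : 0 < smx y m :=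
  div_pos (Real.exp_pos _) (sum_exp_pos y)

lemma smx_sum [NeZero d] (y : Fin d → ℝ) : ∑ m, smx y m = 1 := by
  unfold smx
  rw [← Finset.sum_div, div_self (sum_exp_pos y).ne']

noncomputable def Dsm (y : Fin d → ℝ) : (Fin d → ℝ) →L[ℝ] (Fin d → ℝ) :=
  ContinuousLinearMap.pi fun k => smx y k • (pr k - ∑ l, smx y l • pr l)

lemma Dsm_apply (y v : Fin d → ℝ) (k : Fin d) :
    Dsm y v k = smx y k * (v k - ∑ l, smx y l * v l) := by
  simp [Dsm]

lemma Dsm_single (y : Fin d → ℝ) (i k : Fin d) :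
    Dsm y (Pi.single i 1) k = smx y k * ((if k = i then 1 else 0) - smx y i) := by
  rw [Dsm_apply]
  congr 2
  · simp [Pi.single_apply]
  · simp [Pi.single_apply, mul_ite, Finset.sum_ite_eq']

lemma hasFDerivAt_smx_comp [NeZero d] (y : Fin d → ℝ) (k : Fin d) :
    HasFDerivAt (fun z : Fin d → ℝ => smx z k)
      (smx y k • (pr k - ∑ l, smx y l • pr l)) y := by
  have hnum : HasFDerivAt (fun z : Fin d → ℝ => Real.exp (z k))
      (Real.exp (y k) • pr k) y := HasFDerivAt.exp (pr k).hasFDerivAt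
  have hden : HasFDerivAt (fun z : Fin d → ℝ => ∑ l, Real.exp (z l))
      (∑ l, Real.exp (y l) • pr l) y :=
    HasFDerivAt.fun_sum fun l _ => HasFDerivAt.exp (pr l).hasFDerivAt
  have hinv := (hasDerivAt_inv (sum_exp_pos y).ne').comp_hasFDerivAt y hden
  have h := hnum.fun_mul hinv
  refine h.congr_fderiv ?_
  symm
  ext v
  simp only [smx, ContinuousLinearMap.smul_apply, ContinuousLinearMap.sub_apply,
      pr_apply, ContinuousLinearMap.sum_apply, ContinuousLinearMap.add_apply,
      smul_eq_mul, Function.comp]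
  have h0 := (sum_exp_pos y).ne'
  field_simp
  rw [show (∑ x, Real.exp (y x) * v x / (∑ l, Real.exp (y l)))
      = (∑ x, Real.exp (y x) * v x) / (∑ l, Real.exp (y l)) from (Finset.sum_div ..).symm]
  field_simp
  ring

lemma hasFDerivAt_smx [NeZero d] (y : Fin d → ℝ) : HasFDerivAt smx (Dsm y) y :=
  hasFDerivAt_pi.2 fun k => hasFDerivAt_smx_comp y k

lemma clm_eq_sum {M : Type*} [NormedAddCommGroup M] [NormedSpace ℝ M]
    (f : (Fin d → ℝ) →L[ℝ] M) (v : Fin d → ℝ) :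
    f v = ∑ k, v k • f (Pi.single k 1) := by
  conv_lhs => rw [← Finset.univ_sum_single v]
  rw [map_sum]
  refine Finset.sum_congr rfl fun k _ => ?_
  have h1 : Pi.single k (v k) = v k • (Pi.single k 1 : Fin d → ℝ) := by
    rw [← Pi.single_smul, smul_eq_mul, mul_one]
  rw [h1, map_smul]

lemma sum_shift {d : ℕ} (a f : Fin d → ℝ) (i : Fin d) :
    ∑ l, (a l * ((if l = i then 1 else 0) - a i)) * f l
      = a i * f i - a i * ∑ l, a l * f l := by
  have h : ∀ l, (a l * ((if l = i then 1 else 0) - a i)) * f l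
      = (if l = i then a l * f l else 0) - a i * (a l * f l) := by
    intro l; split <;> ring
  simp only [h]
  rw [Finset.sum_sub_distrib, Finset.sum_ite_eq', ← Finset.mul_sum]
  simp

theorem stmt14 (d : ℕ) (U : Set (Fin d → ℝ)) (hU : IsOpen U)
    (hΔ : {q : Fin d → ℝ | (∀ i, 0 < q i) ∧ ∑ i, q i = 1} ⊆ U)
    (G : (Fin d → ℝ) → ℝ) (hG : ContDiffOn ℝ 2 G U) (hGpos : ∀ y ∈ U, 0 < G y)
    (x μ g π : Fin d → ℝ)
    (hμ : ∀ i, μ i = Real.exp (x i) / ∑ k, Real.exp (x k))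
    (hg : ∀ i, g i = fderiv ℝ (fun z => Real.log (G z)) μ (Pi.single i 1))
    (hπ : ∀ i, π i = μ i * (1 + g i - ∑ k, μ k * g k))
    (i j : Fin d) :
    fderiv ℝ (fun y =>
        fderiv ℝ (fun z : Fin d → ℝ =>
          Real.log (G (fun m => Real.exp (z m) / ∑ l, Real.exp (z l)))) y (Pi.single j 1))
      x (Pi.single i 1)
      = (∑ k, ∑ l,
          (fderiv ℝ (fun y => fderiv ℝ G y (Pi.single k 1)) μ (Pi.single l 1) / G μ)
            * μ l * μ k * (μ j - if j = l then 1 else 0) * (μ i - if i = k then 1 else 0))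
        - π i * π j + μ i * μ j + (if i = j then 1 else 0) * (π i - μ i) := by
  haveI : NeZero d := ⟨i.pos.ne'⟩
  have hsmxU : ∀ y, smx y ∈ U := fun y => hΔ ⟨smx_pos y, smx_sum y⟩
  have hμx : smx x = μ := funext fun k => (hμ k).symm
  have hμU : μ ∈ U := hμx ▸ hsmxU x
  have hGc : ContDiffAt ℝ 2 G μ := hG.contDiffAt (hU.mem_nhds hμU)
  have hGd : ∀ z ∈ U, HasFDerivAt G (fderiv ℝ G z) z := fun z hz =>
    ((hG.contDiffAt (hU.mem_nhds hz)).differentiableAt (by norm_num)).hasFDerivAt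
  have hLog : ∀ z ∈ U, HasFDerivAt (fun w => Real.log (G w)) ((G z)⁻¹ • fderiv ℝ G z) z :=
    fun z hz => (Real.hasDerivAt_log (hGpos z hz).ne').comp_hasFDerivAt z (hGd z hz)
  have hΓ : ∀ y : Fin d → ℝ, HasFDerivAt
      (fun z : Fin d → ℝ => Real.log (G (fun m => Real.exp (z m) / ∑ l, Real.exp (z l))))
      (((G (smx y))⁻¹ • fderiv ℝ G (smx y)).comp (Dsm y)) y := fun y =>
    (hLog (smx y) (hsmxU y)).comp y (hasFDerivAt_smx y)
  have hF : ∀ y : Fin d → ℝ,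
      fderiv ℝ (fun z : Fin d → ℝ =>
          Real.log (G (fun m => Real.exp (z m) / ∑ l, Real.exp (z l)))) y (Pi.single j 1)
      = ∑ k, (fderiv ℝ G (smx y) (Pi.single k 1) * (G (smx y))⁻¹)
          * (smx y k * ((if k = j then 1 else 0) - smx y j)) := by
    intro y
    rw [(hΓ y).fderiv, ContinuousLinearMap.comp_apply, clm_eq_sum _ (Dsm y (Pi.single j 1))]
    refine Finset.sum_congr rfl fun k _ => ?_
    rw [Dsm_single]
    simp only [ContinuousLinearMap.smul_apply, smul_eq_mul]
    ring
  rw [show (fun y => fderiv ℝ (fun z : Fin d → ℝ =>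
          Real.log (G (fun m => Real.exp (z m) / ∑ l, Real.exp (z l)))) y (Pi.single j 1))
      = fun y => ∑ k, (fderiv ℝ G (smx y) (Pi.single k 1) * (G (smx y))⁻¹)
          * (smx y k * ((if k = j then 1 else 0) - smx y j)) from funext hF]
  have hsm := hasFDerivAt_smx x
  set B := fderiv ℝ (fderiv ℝ G) μ with hBdef
  have hB : HasFDerivAt (fderiv ℝ G) B μ :=
    ((hGc.fderiv_right (m := 1) (by norm_num)).differentiableAt (by norm_num)).hasFDerivAt
  have hBx : HasFDerivAt (fderiv ℝ G) B (smx x) := hμx ▸ hB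
  have hGdx : HasFDerivAt G (fderiv ℝ G μ) (smx x) := by rw [hμx]; exact hGd μ hμU
  have hGpos' : (0:ℝ) < G (smx x) := by rw [hμx]; exact hGpos μ hμU
  have hNum : ∀ k : Fin d, HasFDerivAt (fun y => fderiv ℝ G (smx y) (Pi.single k 1))
      ((ContinuousLinearMap.apply ℝ ℝ (Pi.single k 1 : Fin d → ℝ)).comp (B.comp (Dsm x))) x :=
    fun k => (ContinuousLinearMap.apply ℝ ℝ
      (Pi.single k 1 : Fin d → ℝ)).hasFDerivAt.comp x (hBx.comp x hsm)
  have hDen : HasFDerivAt (fun y => G (smx y)) ((fderiv ℝ G μ).comp (Dsm x)) x := hGdx.comp x hsm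
  have hInv : HasFDerivAt (fun y => (G (smx y))⁻¹)
      (-(G (smx x) ^ 2)⁻¹ • (fderiv ℝ G μ).comp (Dsm x)) x :=
    (hasDerivAt_inv hGpos'.ne').comp_hasFDerivAt x hDen
  have hsk : ∀ k : Fin d, HasFDerivAt (fun y => smx y k) ((pr k).comp (Dsm x)) x := fun k =>
    (pr k).hasFDerivAt.comp x hsm
  have hsummand := fun k : Fin d => ((hNum k).fun_mul hInv).fun_mul
    ((hsk k).fun_mul ((hasFDerivAt_const (if k = j then (1:ℝ) else 0) x).fun_sub (hsk j)))
  have htot := HasFDerivAt.fun_sum (u := Finset.univ) fun k _ => hsummand k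
  rw [htot.fderiv]
  simp only [ContinuousLinearMap.sum_apply, ContinuousLinearMap.add_apply,
    ContinuousLinearMap.smul_apply, ContinuousLinearMap.comp_apply, ContinuousLinearMap.sub_apply,
    ContinuousLinearMap.zero_apply, pr_apply, ContinuousLinearMap.apply_apply, smul_eq_mul,
    Function.comp, hμx]
  have hGμ : G μ ≠ 0 := (hGpos μ hμU).ne'
  have hP : ∀ t, Dsm x (Pi.single i 1) t = μ t * ((if t = i then 1 else 0) - μ i) := fun t => by
    rw [Dsm_single, hμx]
  have fa : ∀ l, fderiv ℝ G μ (Pi.single l 1) = G μ * g l := by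
    intro l
    rw [hg l, (hLog μ hμU).fderiv]
    simp only [ContinuousLinearMap.smul_apply, smul_eq_mul]
    field_simp
  have fA : ∀ k l : Fin d, fderiv ℝ (fun y => fderiv ℝ G y (Pi.single k 1)) μ (Pi.single l 1)
      = B (Pi.single l 1) (Pi.single k 1) := by
    intro k l
    have h : HasFDerivAt (fun y => fderiv ℝ G y (Pi.single k 1))
        ((ContinuousLinearMap.apply ℝ ℝ (Pi.single k 1 : Fin d → ℝ)).comp B) μ :=
      (ContinuousLinearMap.apply ℝ ℝ
        (Pi.single k 1 : Fin d → ℝ)).hasFDerivAt.comp μ hB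
    rw [h.fderiv]
    simp
  have hsymm : ∀ k l : Fin d, B (Pi.single l 1) (Pi.single k 1)
      = B (Pi.single k 1) (Pi.single l 1) := fun k l =>
    (hGc.isSymmSndFDerivAt (by simp [minSmoothness_of_isRCLikeNormedField])) _ _
  have hswap : ∀ a b : Fin d, (if a = b then (1:ℝ) else 0) = (if b = a then 1 else 0) := by
    intro a b
    by_cases h : a = b
    · simp [h]
    · simp [h, Ne.symm h]
  have fb : fderiv ℝ G μ (Dsm x (Pi.single i 1))
      = G μ * (μ i * g i - μ i * ∑ k, μ k * g k) := by
    rw [clm_eq_sum (fderiv ℝ G μ) (Dsm x (Pi.single i 1))]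
    simp only [smul_eq_mul, fa, hP]
    rw [sum_shift μ (fun l => G μ * g l) i,
      show (∑ l, μ l * (G μ * g l)) = G μ * ∑ l, μ l * g l from by
        rw [Finset.mul_sum]; exact Finset.sum_congr rfl fun l _ => by ring]
    ring
  have fc : ∀ k : Fin d, (B (Dsm x (Pi.single i 1))) (Pi.single k 1)
      = ∑ l, (μ l * ((if l = i then 1 else 0) - μ i)) * B (Pi.single l 1) (Pi.single k 1) := by
    intro k
    rw [clm_eq_sum B (Dsm x (Pi.single i 1)), ContinuousLinearMap.sum_apply]
    exact Finset.sum_congr rfl fun l _ => by rw [ContinuousLinearMap.smul_apply, hP, smul_eq_mul]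
  simp only [fa, fb, fc, hP]
  have main1 : (∑ k, ∑ l,
        (fderiv ℝ (fun y => fderiv ℝ G y (Pi.single k 1)) μ (Pi.single l 1) / G μ)
          * μ l * μ k * (μ j - if j = l then 1 else 0) * (μ i - if i = k then 1 else 0))
      = ∑ k, (μ k * ((if k = j then 1 else 0) - μ j)) * ((G μ)⁻¹ *
          ∑ l, (μ l * ((if l = i then 1 else 0) - μ i)) * B (Pi.single l 1) (Pi.single k 1)) := by
    rw [Finset.sum_comm]
    refine Finset.sum_congr rfl fun k _ => ?_
    rw [Finset.mul_sum, Finset.mul_sum]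
    refine Finset.sum_congr rfl fun l _ => ?_
    rw [fA l k, ← hsymm k l, hswap j k, hswap i l]
    field_simp
    ring
  rw [main1]
  have LHSsplit : ∀ k : Fin d,
      G μ * g k * (G μ)⁻¹ * (μ k * (0 - μ j * ((if j = i then 1 else 0) - μ i))
          + ((if k = j then 1 else 0) - μ j) * (μ k * ((if k = i then 1 else 0) - μ i)))
        + μ k * ((if k = j then 1 else 0) - μ j) *
          (G μ * g k * (-(G μ ^ 2)⁻¹ * (G μ * (μ i * g i - μ i * ∑ m, μ m * g m)))
            + (G μ)⁻¹ * ∑ l, (μ l * ((if l = i then 1 else 0) - μ i)) * B (Pi.single l 1) (Pi.single k 1))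
      = (g k * (μ k * (0 - μ j * ((if j = i then 1 else 0) - μ i))
          + ((if k = j then 1 else 0) - μ j) * (μ k * ((if k = i then 1 else 0) - μ i)))
        + μ k * ((if k = j then 1 else 0) - μ j) *
            (g k * (-(μ i * g i - μ i * ∑ m, μ m * g m))))
        + (μ k * ((if k = j then 1 else 0) - μ j)) * ((G μ)⁻¹ *
            ∑ l, (μ l * ((if l = i then 1 else 0) - μ i)) * B (Pi.single l 1) (Pi.single k 1)) := by
    intro k
    field_simp
    ring
  rw [Finset.sum_congr rfl fun k _ => LHSsplit k, Finset.sum_add_distrib]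
  have hRest : (∑ k, (g k * (μ k * (0 - μ j * ((if j = i then 1 else 0) - μ i))
          + ((if k = j then 1 else 0) - μ j) * (μ k * ((if k = i then 1 else 0) - μ i)))
        + μ k * ((if k = j then 1 else 0) - μ j) *
            (g k * (-(μ i * g i - μ i * ∑ m, μ m * g m)))))
      = -(π i * π j) + μ i * μ j + (if i = j then 1 else 0) * (π i - μ i) := by
    have expand : ∀ k : Fin d,
        g k * (μ k * (0 - μ j * ((if j = i then 1 else 0) - μ i))
          + ((if k = j then 1 else 0) - μ j) * (μ k * ((if k = i then 1 else 0) - μ i)))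
        + μ k * ((if k = j then 1 else 0) - μ j) *
            (g k * (-(μ i * g i - μ i * ∑ m, μ m * g m)))
        = (if k = j then (g k * (μ k * ((if k = i then 1 else 0) - μ i))
              + μ k * g k * (-(μ i * g i - μ i * ∑ m, μ m * g m))) else 0)
          + (if k = i then (-μ j * (g k * μ k)) else 0)
          + (μ k * g k) * (-(μ j * ((if j = i then 1 else 0) - μ i)) + μ j * μ i
              + μ j * (μ i * g i - μ i * ∑ m, μ m * g m)) := by
      intro k
      by_cases h1 : k = j <;> by_cases h2 : k = i
      · simp only [if_pos h1, if_pos h2, if_pos (h1.symm.trans h2)]; ring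
      · simp only [if_pos h1, if_neg h2, if_neg (fun h : j = i => h2 (h1.trans h))]; ring
      · simp only [if_neg h1, if_pos h2, if_neg (fun h : j = i => h1 (h2.trans h.symm))]; ring
      · simp only [if_neg h1, if_neg h2]; ring
    rw [Finset.sum_congr rfl fun k _ => expand k]
    rw [Finset.sum_add_distrib, Finset.sum_add_distrib, Finset.sum_ite_eq', Finset.sum_ite_eq',
      ← Finset.sum_mul]
    simp only [Finset.mem_univ, if_true]
    rw [hπ i, hπ j]
    by_cases h : i = j
    · subst h
      simp only [if_true]
      ring
    · simp only [h, if_false]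
      rw [show (if j = i then (1:ℝ) else 0) = 0 from by simp [Ne.symm h]]
      ring
  rw [hRest]
  ring
end

section
/- Let Z: [0,∞) → ℝ_+ be a continuous strictly positive path admitting quadratic variation [Z] along a fixed refining sequence of partitions. Then log Z admits quadratic variation along the same sequence and [log Z](t) = ∫_0^t Z(s)^{−2} d[Z](s) (Riemann–Stieltjes integral against the nondecreasing continuous function [Z]). -/
open Filter Topology
open MeasureTheory

/-- Sum of squared increments of `X` along the partition `p` up to time `t`. -/
noncomputable def qvSum (p : ℕ → ℝ) (X : ℝ → ℝ) (t : ℝ) : ℝ :=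
  ∑' k : ℕ, if p k ≤ t then (X (p (k + 1)) - X (p k)) ^ 2 else 0

lemma qvSum_eq_sum (p : ℕ → ℝ) (X : ℝ → ℝ) (s : ℝ) (N : ℕ)
    (hN : ∀ k, N ≤ k → s < p k) :
    qvSum p X s = ∑ k ∈ Finset.range N, if p k ≤ s then (X (p (k+1)) - X (p k))^2 else 0 := by
  apply tsum_eq_sum
  intro k hk
  rw [Finset.mem_range, not_lt] at hk
  rw [if_neg (not_le.mpr (hN k hk))]

lemma log_mvt {a b : ℝ} (ha : 0 < a) (hb : 0 < b) :
    ∃ c, min a b ≤ c ∧ c ≤ max a b ∧ 0 < c ∧ Real.log b - Real.log a = (b - a) / c := by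
  rcases lt_trichotomy a b with h | h | h
  · obtain ⟨c, hc, hceq⟩ := exists_hasDerivAt_eq_slope Real.log (fun x => x⁻¹) h
      (Real.continuousOn_log.mono (fun x hx => by
        simp only [Set.mem_compl_iff, Set.mem_singleton_iff]
        exact (lt_of_lt_of_le ha hx.1).ne'))
      (fun x hx => Real.hasDerivAt_log (lt_trans ha hx.1).ne')
    have hcpos : 0 < c := lt_trans ha hc.1
    have h2 : Real.log b - Real.log a = c⁻¹ * (b - a) := by
      rw [hceq, div_mul_cancel₀ _ (sub_ne_zero.mpr h.ne')]
    refine ⟨c, by rw [min_eq_left h.le]; exact hc.1.le, by rw [max_eq_right h.le]; exact hc.2.le,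
      hcpos, by rw [div_eq_inv_mul]; exact h2⟩
  · exact ⟨a, by simp [h], by simp [h], ha, by simp [h]⟩
  · obtain ⟨c, hc, hceq⟩ := exists_hasDerivAt_eq_slope Real.log (fun x => x⁻¹) h
      (Real.continuousOn_log.mono (fun x hx => by
        simp only [Set.mem_compl_iff, Set.mem_singleton_iff]
        exact (lt_of_lt_of_le hb hx.1).ne'))
      (fun x hx => Real.hasDerivAt_log (lt_trans hb hx.1).ne')
    have hcpos : 0 < c := lt_trans hb hc.1
    have h2 : Real.log a - Real.log b = c⁻¹ * (a - b) := by
      rw [hceq, div_mul_cancel₀ _ (sub_ne_zero.mpr h.ne')]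
    refine ⟨c, by rw [min_eq_right h.le]; exact hc.1.le, by rw [max_eq_left h.le]; exact hc.2.le,
      hcpos, ?_⟩
    rw [div_eq_inv_mul]
    have h3 : c⁻¹ * (b - a) = -(c⁻¹ * (a - b)) := by ring
    rw [h3, ← h2]; ring

lemma inv_sq_diff {m M c d : ℝ} (hm : 0 < m) (hc : m ≤ c) (hcM : c ≤ M) (hd : m ≤ d)
    (hdM : d ≤ M) : |(c⁻¹)^2 - (d⁻¹)^2| ≤ |c - d| * (2*M/m^4) := by
  have hc0 : 0 < c := lt_of_lt_of_le hm hc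
  have hd0 : 0 < d := lt_of_lt_of_le hm hd
  have hM : 0 < M := lt_of_lt_of_le hc0 hcM
  have key : (c⁻¹)^2 - (d⁻¹)^2 = ((d-c)*(d+c))/(c^2*d^2) := by field_simp; ring
  rw [key, abs_div, abs_mul, abs_of_pos (by positivity : (0:ℝ) < d + c),
    abs_of_pos (by positivity : (0:ℝ) < c^2*d^2)]
  have h1 : |d - c| * (d+c) ≤ |c - d| * (2*M) := by
    rw [abs_sub_comm]
    exact mul_le_mul_of_nonneg_left (by linarith) (abs_nonneg _)
  have hm2c : m^2 ≤ c^2 := by nlinarith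
  have hm2d : m^2 ≤ d^2 := by nlinarith
  have h2 : m^4 ≤ c^2 * d^2 := by
    calc m^4 = m^2 * m^2 := by ring
      _ ≤ c^2 * d^2 := mul_le_mul hm2c hm2d (by positivity) (by positivity)
  calc |d - c| * (d + c) / (c^2 * d^2) ≤ |c - d| * (2*M) / m^4 :=
        div_le_div₀ (by positivity) h1 (by positivity) h2
    _ = |c - d| * (2*M/m^4) := by ring

lemma exists_block (s : ℕ → ℝ) (hmono : ∀ i j, i ≤ j → s i ≤ s j) (J : ℕ) (x : ℝ)
    (h0 : s 0 < x) (hJ : x ≤ s J) :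
    ∃ j, j < J ∧ s j < x ∧ x ≤ s (j+1) ∧ ∀ j', j' < J → j' ≠ j → ¬(s j' < x ∧ x ≤ s (j'+1)) := by
  classical
  set j := Nat.findGreatest (fun j => s j < x) J with hjdef
  have hsj : s j < x := Nat.findGreatest_spec (P := fun j => s j < x) (Nat.zero_le J) h0
  have hjJ : j ≠ J := fun h => absurd hsj (by rw [h]; exact not_lt.mpr hJ)
  have hjlt : j < J := lt_of_le_of_ne (Nat.findGreatest_le J) hjJ
  have hx1 : x ≤ s (j+1) := by
    by_contra h
    exact Nat.findGreatest_is_greatest (P := fun j => s j < x) (Nat.lt_succ_self j) hjlt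
      (not_le.mp h)
  refine ⟨j, hjlt, hsj, hx1, fun j' hj' hne h' => ?_⟩
  rcases lt_or_gt_of_ne hne with hlt | hgt
  · exact absurd (lt_of_le_of_lt (hmono _ _ (Nat.succ_le_of_lt hlt)) hsj) (not_lt.mpr h'.2)
  · exact absurd (lt_of_le_of_lt (hmono _ _ (Nat.succ_le_of_lt hgt)) h'.1) (not_lt.mpr hx1)

lemma ite_sub_ite' (x sj sj1 w : ℝ) (h : sj ≤ sj1) :
    (if x ≤ sj1 then w else 0) - (if x ≤ sj then w else 0)
      = if sj < x ∧ x ≤ sj1 then w else 0 := by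
  rcases le_or_gt x sj with hb | hb
  · rw [if_pos (hb.trans h), if_pos hb, if_neg (fun hc => absurd hb (not_le.mpr hc.1)), sub_self]
  · rcases le_or_gt x sj1 with ha | ha
    · rw [if_pos ha, if_neg (not_le.mpr hb), if_pos ⟨hb, ha⟩, sub_zero]
    · rw [if_neg (not_le.mpr ha), if_neg (not_le.mpr hb),
        if_neg (fun hc => absurd hc.2 (not_le.mpr ha)), sub_self]

lemma unif_cont (f : ℝ → ℝ) (hf : Continuous f) (a b : ℝ) (ε : ℝ) (hε : 0 < ε) :
    ∃ δ > 0, ∀ x ∈ Set.Icc a b, ∀ y ∈ Set.Icc a b, |x - y| < δ → |f x - f y| < ε := by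
  have h := (isCompact_Icc (a := a) (b := b)).uniformContinuousOn_of_continuous hf.continuousOn
  rw [Metric.uniformContinuousOn_iff] at h
  obtain ⟨δ, hδ, h⟩ := h ε hε
  exact ⟨δ, hδ, fun x hx y hy hxy => by
    simpa [Real.dist_eq] using h x hx y hy (by simpa [Real.dist_eq] using hxy)⟩

lemma zpow_neg_two_eq (x:ℝ) : x^(-2:ℤ) = (x⁻¹)^2 := by
  rw [zpow_neg, show (2:ℤ) = ((2:ℕ):ℤ) from rfl, zpow_natCast, inv_pow]

lemma per_k (Z : ℝ → ℝ) (m M : ℝ) (hm : 0 < m) (a b ε₁ : ℝ)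
    (hZa : Z a ∈ Set.Icc m M) (hZb : Z b ∈ Set.Icc m M)
    (hZclose : |Z b - Z a| * (2*M/m^4) ≤ ε₁) :
    |(Real.log (Z b) - Real.log (Z a))^2 - (Z a)^(-2:ℤ) * (Z b - Z a)^2|
      ≤ ε₁ * (Z b - Z a)^2 := by
  obtain ⟨c, hc1, hc2, hc0, hceq⟩ := log_mvt (lt_of_lt_of_le hm hZa.1) (lt_of_lt_of_le hm hZb.1)
  have hcm : m ≤ c := le_trans (le_min hZa.1 hZb.1) hc1
  have hcM : c ≤ M := le_trans hc2 (max_le hZa.2 hZb.2)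
  have hsq : (Real.log (Z b) - Real.log (Z a))^2 = (Z b - Z a)^2 * (c⁻¹)^2 := by
    rw [hceq, div_pow, div_eq_mul_inv, inv_pow]
  have hcd : |c - Z a| ≤ |Z b - Z a| := by
    rcases le_total (Z a) (Z b) with h | h
    · rw [min_eq_left h, max_eq_right h] at *
      rw [abs_of_nonneg (by linarith), abs_of_nonneg (by linarith)]; linarith
    · rw [min_eq_right h, max_eq_left h] at *
      rw [abs_of_nonpos (by linarith), abs_of_nonpos (by linarith)]; linarith
  have key := inv_sq_diff hm hcm hcM hZa.1 hZa.2
  calc |(Real.log (Z b) - Real.log (Z a))^2 - (Z a)^(-2:ℤ) * (Z b - Z a)^2|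
      = (Z b - Z a)^2 * |(c⁻¹)^2 - ((Z a)⁻¹)^2| := by
        rw [hsq, zpow_neg_two_eq,
          show (Z b - Z a)^2 * (c⁻¹)^2 - ((Z a)⁻¹)^2 * (Z b - Z a)^2
            = (Z b - Z a)^2 * ((c⁻¹)^2 - ((Z a)⁻¹)^2) from by ring,
          abs_mul, abs_of_nonneg (sq_nonneg (Z b - Z a))]
    _ ≤ (Z b - Z a)^2 * (|c - Z a| * (2*M/m^4)) :=
        mul_le_mul_of_nonneg_left key (sq_nonneg _)
    _ ≤ (Z b - Z a)^2 * (|Z b - Z a| * (2*M/m^4)) := by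
        have hMpos : (0:ℝ) < M := lt_of_lt_of_le (lt_of_lt_of_le hm hZa.1) hZa.2
        have hMm : (0:ℝ) < 2*M/m^4 := by positivity
        exact mul_le_mul_of_nonneg_left
          (mul_le_mul_of_nonneg_right hcd hMm.le) (sq_nonneg _)
    _ ≤ (Z b - Z a)^2 * ε₁ := mul_le_mul_of_nonneg_left hZclose (sq_nonneg _)
    _ = ε₁ * (Z b - Z a)^2 := by ring

lemma block_integral (Q : StieltjesFunction ℝ) (g : ℝ → ℝ) (hgcont : Continuous g)
    (a b : ℝ) (hab : a ≤ b) (ε : ℝ)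
    (hbound : ∀ x ∈ Set.Ioc a b, |g x - g a| ≤ ε) :
    |(∫ s in Set.Ioc a b, g s ∂Q.measure) - g a * (Q b - Q a)| ≤ ε * (Q b - Q a) := by
  have hQab : 0 ≤ Q b - Q a := sub_nonneg.mpr (Q.mono hab)
  have hfin : Q.measure (Set.Ioc a b) < ⊤ := by
    rw [Q.measure_Ioc]; exact ENNReal.ofReal_lt_top
  have hint : IntegrableOn g (Set.Ioc a b) Q.measure := hgcont.integrableOn_Ioc
  have hconst : ∫ _ in Set.Ioc a b, g a ∂Q.measure = g a * (Q b - Q a) := by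
    rw [setIntegral_const, measureReal_def, Q.measure_Ioc, ENNReal.toReal_ofReal hQab, smul_eq_mul, mul_comm]
  have hdiff : (∫ s in Set.Ioc a b, g s ∂Q.measure) - g a * (Q b - Q a)
      = ∫ s in Set.Ioc a b, (g s - g a) ∂Q.measure := by
    rw [← hconst, ← integral_sub hint (integrableOn_const hfin.ne)]
  rw [hdiff]
  have hb := norm_setIntegral_le_of_norm_le_const (μ := Q.measure) (s := Set.Ioc a b)
    (f := fun s => g s - g a) (C := ε) hfin
    (fun x hx => by rw [Real.norm_eq_abs]; exact hbound x hx)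
  rw [Real.norm_eq_abs, measureReal_def, Q.measure_Ioc, ENNReal.toReal_ofReal hQab] at hb
  exact hb

theorem stmt15 (p : ℕ → ℕ → ℝ)
    (hp0 : ∀ n, p n 0 = 0)
    (hmono : ∀ n, StrictMono (p n))
    (htop : ∀ n, Tendsto (p n) atTop atTop)
    (hrefine : ∀ n, Set.range (p n) ⊆ Set.range (p (n + 1)))
    (hmesh : ∀ T > (0 : ℝ), ∀ ε > (0 : ℝ), ∀ᶠ n in atTop, ∀ k, p n k ≤ T → p n (k + 1) - p n k < ε)
    (Z : ℝ → ℝ) (hZ : Continuous Z) (hZpos : ∀ t, 0 < Z t)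
    (Q : StieltjesFunction ℝ) (hQcont : Continuous Q) (hQ0 : Q 0 = 0)
    (hQ : ∀ t ≥ (0 : ℝ), Tendsto (fun n => qvSum (p n) Z t) atTop (𝓝 (Q t))) :
    ∀ t ≥ (0 : ℝ), Tendsto (fun n => qvSum (p n) (fun s => Real.log (Z s)) t) atTop
      (𝓝 (∫ s in Set.Ioc 0 t, (Z s) ^ (-2 : ℤ) ∂Q.measure)) := by
  intro t ht
  have ht1 : (0:ℝ) ≤ t + 1 := by linarith
  set g : ℝ → ℝ := fun s => (Z s)^(-2:ℤ) with hgdef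
  have hgcont : Continuous g := by
    have h1 : Continuous fun s => ((Z s)⁻¹)^2 := (hZ.inv₀ (fun x => (hZpos x).ne')).pow 2
    rw [hgdef]
    simpa only [← zpow_neg_two_eq] using h1
  obtain ⟨xm, hxm, hminZ⟩ := isCompact_Icc.exists_isMinOn (Set.nonempty_Icc.mpr ht1)
    hZ.continuousOn
  obtain ⟨xM, hxM, hmaxZ⟩ := isCompact_Icc.exists_isMaxOn (Set.nonempty_Icc.mpr ht1)
    hZ.continuousOn
  set m := Z xm with hmdef
  set M := Z xM with hMdef
  have hm : 0 < m := hZpos xm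
  have hZmem : ∀ s ∈ Set.Icc (0:ℝ) (t+1), Z s ∈ Set.Icc m M :=
    fun s hs => ⟨hminZ hs, hmaxZ hs⟩
  have hMpos : 0 < M := lt_of_lt_of_le hm (hminZ hxM)
  have hQt : 0 ≤ Q t := by rw [← hQ0]; exact Q.mono ht
  rw [Metric.tendsto_nhds]
  intro ε hε
  set I := ∫ s in Set.Ioc 0 t, g s ∂Q.measure with hIdef
  set ε₁ := ε / (4 * (Q t + 1)) with hε₁def
  have hε₁ : 0 < ε₁ := by apply div_pos hε; nlinarith
  obtain ⟨δg, hδg0, hδg⟩ := unif_cont g hgcont 0 (t+1) ε₁ hε₁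
  obtain ⟨δZ, hδZ0, hδZ⟩ := unif_cont Z hZ 0 (t+1) (ε₁ * m^4/(2*M)) (by positivity)
  set δ := min (min δg δZ) 1 with hδdef
  have hδ0 : 0 < δ := lt_min (lt_min hδg0 hδZ0) one_pos
  have hδ1 : δ ≤ 1 := min_le_right _ _
  have hδg' : δ ≤ δg := le_trans (min_le_left _ _) (min_le_left _ _)
  have hδZ' : δ ≤ δZ := le_trans (min_le_left _ _) (min_le_right _ _)
  obtain ⟨J, hJ⟩ := exists_nat_gt (t/δ)
  have hJ0 : 0 < J := by
    have h0 : (0:ℝ) ≤ t/δ := div_nonneg ht hδ0.le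
    exact_mod_cast Nat.cast_pos.mp (lt_of_le_of_lt h0 hJ)
  have hJR : (0:ℝ) < J := Nat.cast_pos.mpr hJ0
  set η := t / J with hηdef
  have hη0 : 0 ≤ η := div_nonneg ht hJR.le
  have hηδ : η < δ := by
    rw [hηdef, div_lt_iff₀ hJR]
    have := (div_lt_iff₀ hδ0).mp hJ
    linarith
  set sg : ℕ → ℝ := fun j => (j:ℝ) * η with hsgdef
  have hsg0 : sg 0 = 0 := by simp [hsgdef]
  have hsgJ : sg J = t := by
    simp only [hsgdef, hηdef]
    rw [mul_comm, div_mul_cancel₀ _ hJR.ne']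
  have hsgstep : ∀ j : ℕ, sg (j+1) = sg j + η := by
    intro j; simp only [hsgdef]; push_cast; ring
  have hsgmono : ∀ i j : ℕ, i ≤ j → sg i ≤ sg j := by
    intro i j hij
    simp only [hsgdef]
    exact mul_le_mul_of_nonneg_right (by exact_mod_cast hij) hη0
  have hsgnn : ∀ j, 0 ≤ sg j := fun j => hsg0 ▸ hsgmono 0 j (Nat.zero_le j)
  have hsgt : ∀ j, j ≤ J → sg j ≤ t := fun j hj => hsgJ ▸ hsgmono j J hj
  have hsgmem : ∀ j, j ≤ J → sg j ∈ Set.Icc (0:ℝ) (t+1) :=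
    fun j hj => ⟨hsgnn j, by linarith [hsgt j hj]⟩
  set Cinf := ∑ j ∈ Finset.range J, g (sg j) * (Q (sg (j+1)) - Q (sg j)) with hCinfdef
  have hIest : |I - Cinf| ≤ ε₁ * Q t := by
    have hIeq : I = ∑ j ∈ Finset.range J,
        ∫ s in Set.Ioc (sg j) (sg (j+1)), g s ∂Q.measure := by
      have hii : ∀ k, k < J → IntervalIntegrable g Q.measure (sg k) (sg (k+1)) :=
        fun k _ => hgcont.intervalIntegrable _ _
      have h2 := intervalIntegral.sum_integral_adjacent_intervals (μ := Q.measure)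
        (a := sg) (f := g) hii
      rw [hsg0, hsgJ] at h2
      rw [hIdef, ← intervalIntegral.integral_of_le ht, ← h2]
      apply Finset.sum_congr rfl
      intro j _
      exact intervalIntegral.integral_of_le (by rw [hsgstep]; linarith)
    rw [hIeq, hCinfdef, ← Finset.sum_sub_distrib]
    refine le_trans (Finset.abs_sum_le_sum_abs _ _)
      (le_trans (Finset.sum_le_sum (g := fun j => ε₁ * (Q (sg (j+1)) - Q (sg j))) ?_)
        (le_of_eq ?_))
    · intro j hj
      rw [Finset.mem_range] at hj
      apply block_integral Q g hgcont _ _ (by rw [hsgstep]; linarith) ε₁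
      intro x hx
      have hx2 : x ≤ t := le_trans hx.2 (hsgt (j+1) hj)
      have hxmem : x ∈ Set.Icc (0:ℝ) (t+1) :=
        ⟨le_trans (hsgnn j) hx.1.le, by linarith⟩
      apply le_of_lt
      apply hδg x hxmem (sg j) (hsgmem j hj.le)
      rw [abs_of_pos (sub_pos.mpr hx.1)]
      have hxs := hx.2
      rw [hsgstep] at hxs
      linarith [hδg']
    · rw [← Finset.mul_sum, Finset.sum_range_sub (fun j => Q (sg j)), hsg0, hsgJ, hQ0, sub_zero]
  set Cn : ℕ → ℝ := fun n => g 0 * qvSum (p n) Z 0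
    + ∑ j ∈ Finset.range J, g (sg j) * (qvSum (p n) Z (sg (j+1)) - qvSum (p n) Z (sg j))
    with hCndef
  have hCconv : Tendsto Cn atTop (𝓝 Cinf) := by
    have h1 : Tendsto (fun n => g 0 * qvSum (p n) Z 0) atTop (𝓝 (g 0 * Q 0)) :=
      (hQ 0 le_rfl).const_mul _
    have h2 : Tendsto (fun n => ∑ j ∈ Finset.range J,
        g (sg j) * (qvSum (p n) Z (sg (j+1)) - qvSum (p n) Z (sg j))) atTop (𝓝 Cinf) := by
      rw [hCinfdef]
      apply tendsto_finset_sum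
      intro j _
      exact ((hQ _ (hsgnn (j+1))).sub (hQ _ (hsgnn j))).const_mul _
    have h3 := h1.add h2
    rw [hQ0, mul_zero, zero_add] at h3
    exact h3
  have E3 : ∀ᶠ n in atTop, |Cn n - Cinf| < ε₁ := by
    have h := Metric.tendsto_nhds.mp hCconv ε₁ hε₁
    simpa [Real.dist_eq] using h
  have E2 : ∀ᶠ n in atTop, |qvSum (p n) Z t - Q t| < 1 := by
    have h := Metric.tendsto_nhds.mp (hQ t ht) 1 one_pos
    simpa [Real.dist_eq] using h
  have E1 := hmesh (t+1) (by linarith) δ hδ0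
  filter_upwards [E1, E2, E3] with n h1 h2 h3
  rw [Real.dist_eq]
  obtain ⟨N, hN⟩ : ∃ N, ∀ k, k ≥ N → t + 1 < p n k := by
    have h := (htop n).eventually (eventually_gt_atTop (t+1))
    exact eventually_atTop.mp h
  have hpnn : ∀ k, 0 ≤ p n k := fun k => by
    rw [← hp0 n]; exact (hmono n).monotone (Nat.zero_le k)
  set w : ℕ → ℝ := fun k => (Z (p n (k+1)) - Z (p n k))^2 with hwdef
  have hwnn : ∀ k, 0 ≤ w k := fun k => sq_nonneg _
  have hF : ∀ s : ℝ, s ≤ t + 1 →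
      qvSum (p n) Z s = ∑ k ∈ Finset.range N, if p n k ≤ s then w k else 0 :=
    fun s hs => qvSum_eq_sum _ _ _ N (fun k hk => lt_of_le_of_lt hs (hN k hk))
  have hA : qvSum (p n) (fun s => Real.log (Z s)) t
      = ∑ k ∈ Finset.range N, if p n k ≤ t then
          (Real.log (Z (p n (k+1))) - Real.log (Z (p n k)))^2 else 0 :=
    qvSum_eq_sum _ _ _ N (fun k hk => lt_of_le_of_lt (by linarith) (hN k hk))
  set B := ∑ k ∈ Finset.range N, if p n k ≤ t then g (p n k) * w k else 0 with hBdef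
  have hFnt_eq : qvSum (p n) Z t = ∑ k ∈ Finset.range N, if p n k ≤ t then w k else 0 :=
    hF t (by linarith)
  have hmesh' : ∀ k, p n k ≤ t →
      p n (k+1) ≤ t + 1 ∧ |Z (p n (k+1)) - Z (p n k)| < ε₁ * m^4/(2*M) := by
    intro k hk
    have hstep := h1 k (by linarith)
    have hk1 : p n (k+1) ≤ t + 1 := by linarith
    refine ⟨hk1, ?_⟩
    apply hδZ _ ⟨hpnn _, hk1⟩ _ ⟨hpnn k, by linarith⟩
    rw [abs_of_pos (sub_pos.mpr ((hmono n) (Nat.lt_succ_self k)))]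
    linarith
  have hsum_eq : ∑ k ∈ Finset.range N, (if p n k ≤ t then ε₁ * w k else 0)
      = ε₁ * qvSum (p n) Z t := by
    rw [hFnt_eq, Finset.mul_sum]
    apply Finset.sum_congr rfl
    intro k _
    rw [mul_ite, mul_zero]
  have hest1 : |qvSum (p n) (fun s => Real.log (Z s)) t - B| ≤ ε₁ * qvSum (p n) Z t := by
    rw [hA, hBdef, ← Finset.sum_sub_distrib]
    refine le_trans (Finset.abs_sum_le_sum_abs _ _)
      (le_trans (Finset.sum_le_sum ?_) (le_of_eq hsum_eq))
    intro k _
    by_cases hk : p n k ≤ t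
    · rw [if_pos hk, if_pos hk, if_pos hk]
      obtain ⟨hk1, hZcl⟩ := hmesh' k hk
      have hclose : |Z (p n (k+1)) - Z (p n k)| * (2*M/m^4) ≤ ε₁ := by
        calc |Z (p n (k+1)) - Z (p n k)| * (2*M/m^4)
            ≤ (ε₁ * m^4/(2*M)) * (2*M/m^4) :=
              mul_le_mul_of_nonneg_right hZcl.le (by positivity)
          _ = ε₁ := by field_simp
      exact per_k Z m M hm _ _ ε₁ (hZmem _ ⟨hpnn k, by linarith⟩)
        (hZmem _ ⟨hpnn _, hk1⟩) hclose
    · rw [if_neg hk, if_neg hk, if_neg hk, sub_zero, abs_zero]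
  have hCn_eq : Cn n = ∑ k ∈ Finset.range N, ((if p n k ≤ 0 then g 0 * w k else 0)
      + ∑ j ∈ Finset.range J,
        if sg j < p n k ∧ p n k ≤ sg (j+1) then g (sg j) * w k else 0) := by
    rw [Finset.sum_add_distrib]
    simp only [hCndef]
    congr 1
    · rw [hF 0 (by linarith), Finset.mul_sum]
      apply Finset.sum_congr rfl
      intro k _
      rw [mul_ite, mul_zero]
    · have hper : ∀ j ∈ Finset.range J,
          g (sg j) * (qvSum (p n) Z (sg (j+1)) - qvSum (p n) Z (sg j))
            = ∑ k ∈ Finset.range N,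
              (if sg j < p n k ∧ p n k ≤ sg (j+1) then g (sg j) * w k else 0) := by
        intro j hj
        rw [Finset.mem_range] at hj
        rw [hF (sg (j+1)) (by linarith [hsgt (j+1) hj]), hF (sg j) (by linarith [hsgt j hj.le]),
          ← Finset.sum_sub_distrib, Finset.mul_sum]
        apply Finset.sum_congr rfl
        intro k _
        rw [ite_sub_ite' _ _ _ _ (hsgmono j (j+1) (Nat.le_succ j)), mul_ite, mul_zero]
      rw [Finset.sum_congr rfl hper, Finset.sum_comm]
  have hest2 : |B - Cn n| ≤ ε₁ * qvSum (p n) Z t := by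
    rw [hBdef, hCn_eq, ← Finset.sum_sub_distrib]
    refine le_trans (Finset.abs_sum_le_sum_abs _ _)
      (le_trans (Finset.sum_le_sum ?_) (le_of_eq hsum_eq))
    intro k _
    by_cases hk : p n k ≤ t
    · rw [if_pos hk, if_pos hk]
      by_cases hk0 : p n k ≤ 0
      · have hk0' : p n k = 0 := le_antisymm hk0 (hpnn k)
        rw [if_pos hk0]
        have hz : ∀ j ∈ Finset.range J,
            (if sg j < p n k ∧ p n k ≤ sg (j+1) then g (sg j) * w k else 0) = 0 := by
          intro j _
          rw [if_neg]
          rintro ⟨hj1, -⟩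
          rw [hk0'] at hj1
          exact absurd hj1 (not_lt.mpr (hsgnn j))
        rw [Finset.sum_eq_zero hz, add_zero, hk0', sub_self, abs_zero]
        exact mul_nonneg hε₁.le (hwnn k)
      · rw [if_neg hk0, zero_add]
        push_neg at hk0
        obtain ⟨j₀, hj₀J, hj₀1, hj₀2, huniq⟩ := exists_block sg hsgmono J (p n k)
          (by rw [hsg0]; exact hk0) (by rw [hsgJ]; exact hk)
        rw [Finset.sum_eq_single_of_mem j₀ (Finset.mem_range.mpr hj₀J)
          (fun j hjr hne => if_neg (huniq j (Finset.mem_range.mp hjr) hne)),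
          if_pos ⟨hj₀1, hj₀2⟩,
          show g (p n k) * w k - g (sg j₀) * w k = (g (p n k) - g (sg j₀)) * w k from by ring,
          abs_mul, abs_of_nonneg (hwnn k)]
        apply mul_le_mul_of_nonneg_right _ (hwnn k)
        apply le_of_lt
        apply hδg _ ⟨hpnn k, by linarith⟩ _ (hsgmem j₀ hj₀J.le)
        rw [abs_of_pos (sub_pos.mpr hj₀1)]
        have hs := hsgstep j₀
        linarith
    · have hz1 : (if p n k ≤ 0 then g 0 * w k else 0) = 0 :=
        if_neg (fun h0 => hk (le_trans h0 ht))
      have hz2 : ∀ j ∈ Finset.range J,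
          (if sg j < p n k ∧ p n k ≤ sg (j+1) then g (sg j) * w k else 0) = 0 := by
        intro j hjr
        rw [Finset.mem_range] at hjr
        rw [if_neg]
        rintro ⟨-, hle⟩
        exact hk (le_trans hle (hsgt _ hjr))
      rw [if_neg hk, if_neg hk, hz1, Finset.sum_eq_zero hz2, add_zero, sub_zero, abs_zero]
  have hFnt_le : qvSum (p n) Z t ≤ Q t + 1 := by
    have hh := abs_lt.mp h2
    linarith [hh.1, hh.2]
  have hkey : |qvSum (p n) (fun s => Real.log (Z s)) t - I|
      ≤ |qvSum (p n) (fun s => Real.log (Z s)) t - B| + |B - Cn n|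
        + (|Cn n - Cinf| + |Cinf - I|) := by
    calc |qvSum (p n) (fun s => Real.log (Z s)) t - I|
        ≤ |qvSum (p n) (fun s => Real.log (Z s)) t - Cn n| + |Cn n - I| := abs_sub_le _ _ _
      _ ≤ (|qvSum (p n) (fun s => Real.log (Z s)) t - B| + |B - Cn n|)
          + (|Cn n - Cinf| + |Cinf - I|) := add_le_add (abs_sub_le _ _ _) (abs_sub_le _ _ _)
      _ = _ := by ring
  have hIC : |Cinf - I| ≤ ε₁ * Q t := by rw [abs_sub_comm]; exact hIest
  have hmul : ε₁ * qvSum (p n) Z t ≤ ε₁ * (Q t + 1) :=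
    mul_le_mul_of_nonneg_left hFnt_le hε₁.le
  have heq4 : ε₁ * (Q t + 1) * 4 = ε := by
    rw [hε₁def]; field_simp
  have hQt1 : ε₁ * Q t + ε₁ = ε₁ * (Q t + 1) := by ring
  linarith [hkey, hest1, hest2, h3, hIC, hmul, hQt1, heq4, hε₁]
end
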